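/- Let 0 < β_2 < β_1 < 1/2 and M > 0. (a) The unique maximizer of E(γ_1,γ_2) = γ_1 + γ_2 over Ω = { (γ_1,γ_2) ∈ [0,M]² : β_1γ_1 + β_2γ_2 ≤ M, (1−β_1)γ_1 + (1−β_2)γ_2 ≤ M } is (M, β_1 M/(1−β_2)). (b) The unique maximizer of E over the set with the coefficients swapped, Ω' = { (γ_1,γ_2) ∈ [0,M]² : β_2γ_1 + β_1γ_2 ≤ M, (1−β_2)γ_1 + (1−β_1)γ_2 ≤ M }, is (β_1 M/(1−β_2), M). Consequently the distance between the two maximizers in the ℓ¹ norm equals 2(M − β_1 M/(1−β_2)) ≥ 2M(1 − 2β_1)/(1−β_2) > 0, a quantity bounded away from 0 as β_1 → β_2. -/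

import Mathlib

open Set

/-- Section 8 (time dependent coefficients): swapping the distribution
coefficients `(β₁, β₂)` of the two incoming roads swaps the unique maximizer
from `(M, β₁M/(1−β₂))` to `(β₁M/(1−β₂), M)`; the ℓ¹ distance between the two
equilibria equals `2(M − β₁M/(1−β₂)) ≥ 2M(1−2β₁)/(1−β₂) > 0`, a quantity
bounded away from `0` as `β₁ → β₂`. -/
theorem stmt16 (β₁ β₂ M : ℝ)
    (h₂ : 0 < β₂) (h₂₁ : β₂ < β₁) (h₁ : β₁ < 1/2) (hM : 0 < M)
    (Ω Ω' : Set (ℝ × ℝ))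
    (hΩ : Ω = {p | p.1 ∈ Icc (0 : ℝ) M ∧ p.2 ∈ Icc (0 : ℝ) M ∧
      β₁ * p.1 + β₂ * p.2 ≤ M ∧ (1 - β₁) * p.1 + (1 - β₂) * p.2 ≤ M})
    (hΩ' : Ω' = {p | p.1 ∈ Icc (0 : ℝ) M ∧ p.2 ∈ Icc (0 : ℝ) M ∧
      β₂ * p.1 + β₁ * p.2 ≤ M ∧ (1 - β₂) * p.1 + (1 - β₁) * p.2 ≤ M}) :
    ((M, β₁ * M / (1 - β₂)) : ℝ × ℝ) ∈ Ω ∧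
    (∀ q ∈ Ω, q.1 + q.2 ≤ M + β₁ * M / (1 - β₂)) ∧
    (∀ q ∈ Ω, (∀ q' ∈ Ω, q'.1 + q'.2 ≤ q.1 + q.2) →
      q = ((M, β₁ * M / (1 - β₂)) : ℝ × ℝ)) ∧
    ((β₁ * M / (1 - β₂), M) : ℝ × ℝ) ∈ Ω' ∧
    (∀ q ∈ Ω', q.1 + q.2 ≤ β₁ * M / (1 - β₂) + M) ∧
    (∀ q ∈ Ω', (∀ q' ∈ Ω', q'.1 + q'.2 ≤ q.1 + q.2) →
      q = ((β₁ * M / (1 - β₂), M) : ℝ × ℝ)) ∧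
    (|M - β₁ * M / (1 - β₂)| + |β₁ * M / (1 - β₂) - M| =
      2 * (M - β₁ * M / (1 - β₂))) ∧
    2 * M * (1 - 2 * β₁) / (1 - β₂) ≤ 2 * (M - β₁ * M / (1 - β₂)) ∧
    0 < 2 * M * (1 - 2 * β₁) / (1 - β₂) := by

  have hb : (0:ℝ) < 1 - β₂ := by linarith
  set c : ℝ := β₁ * M / (1 - β₂) with hcdef
  have hce : (1 - β₂) * c = β₁ * M := by
    rw [hcdef]; field_simp [hb.ne']
  have hcM : c ≤ M := by
    rw [hcdef, div_le_iff₀ hb]; nlinarith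
  have hc0 : 0 ≤ c := by
    rw [hcdef]; exact div_nonneg (by nlinarith) hb.le
  have hmem₁ : ((M, c) : ℝ × ℝ) ∈ Ω := by
    rw [hΩ]
    refine ⟨⟨hM.le, le_refl _⟩, ⟨hc0, hcM⟩, ?_, ?_⟩
    · simp only
      nlinarith [mul_le_mul_of_nonneg_left hcM h₂.le]
    · simp only
      nlinarith [hce]
  have hmax₁ : ∀ q ∈ Ω, q.1 + q.2 ≤ M + c := by
    rw [hΩ]
    rintro q ⟨⟨hq10, hq1M⟩, ⟨hq20, hq2M⟩, hA, hB⟩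
    have key : (1 - β₂) * (q.1 + q.2) ≤ (1 - β₂) * M + β₁ * M := by nlinarith
    nlinarith [hce]
  have hmem₂ : ((c, M) : ℝ × ℝ) ∈ Ω' := by
    rw [hΩ']
    refine ⟨⟨hc0, hcM⟩, ⟨hM.le, le_refl _⟩, ?_, ?_⟩
    · simp only
      nlinarith [mul_le_mul_of_nonneg_left hcM h₂.le]
    · simp only
      nlinarith [hce]
  have hmax₂ : ∀ q ∈ Ω', q.1 + q.2 ≤ c + M := by
    rw [hΩ']
    rintro q ⟨⟨hq10, hq1M⟩, ⟨hq20, hq2M⟩, hA, hB⟩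
    have key : (1 - β₂) * (q.1 + q.2) ≤ (1 - β₂) * M + β₁ * M := by nlinarith
    nlinarith [hce]
  refine ⟨hmem₁, hmax₁, ?_, hmem₂, hmax₂, ?_, ?_, ?_, ?_⟩
  · intro q hq hopt
    have hge : M + c ≤ q.1 + q.2 := hopt _ hmem₁
    rw [hΩ] at hq
    obtain ⟨⟨hq10, hq1M⟩, ⟨hq20, hq2M⟩, hA, hB⟩ := hq
    have hge' : (1 - β₂) * M + β₁ * M ≤ (1 - β₂) * (q.1 + q.2) := by
      nlinarith [mul_le_mul_of_nonneg_left hge hb.le]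
    have hq1 : q.1 = M := by nlinarith
    have hq2le : q.2 ≤ c := by
      rw [hcdef, le_div_iff₀ hb]; nlinarith
    have hq2ge : c ≤ q.2 := by linarith
    have hq2 : q.2 = c := le_antisymm hq2le hq2ge
    exact Prod.ext hq1 hq2
  · intro q hq hopt
    have hge : c + M ≤ q.1 + q.2 := hopt _ hmem₂
    rw [hΩ'] at hq
    obtain ⟨⟨hq10, hq1M⟩, ⟨hq20, hq2M⟩, hA, hB⟩ := hq
    have hge' : (1 - β₂) * M + β₁ * M ≤ (1 - β₂) * (q.1 + q.2) := by
      nlinarith [mul_le_mul_of_nonneg_left hge hb.le]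
    have hq2 : q.2 = M := by nlinarith
    have hq1le : q.1 ≤ c := by
      rw [hcdef, le_div_iff₀ hb]; nlinarith
    have hq1ge : c ≤ q.1 := by linarith
    have hq1 : q.1 = c := le_antisymm hq1le hq1ge
    exact Prod.ext hq1 hq2
  · rw [abs_of_nonneg (by linarith), abs_of_nonpos (by linarith)]
    ring
  · rw [div_le_iff₀ hb]
    nlinarith [hce]
  · exact div_pos (by nlinarith) hb
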